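/- Let β > 1/2. Then the Rayleigh-quotient expression [ (a²/4)·∫₀¹ (Δ_a(w)+1)²·Δ_a(w)^{2β−5/2} dw + 4β²·(1−a²)²·∫₀¹ Δ_a(w)^{2β−5/2}·w²·(1−w²) dw ] / ∫₀¹ Δ_a(w)^{2β+1/2} dw tends to 2β(2β+1)/(2β−1) as a → 0⁺, where Δ_a(w) = (1−a²)·w² + a². -/

import Mathlib

open Filter Set intervalIntegral MeasureTheory

private lemma aux_rpow_le {x w : ℝ} (hw : 0 < w) (h1 : w^2 ≤ x) (h2 : x ≤ 1) (q : ℝ) :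
    x ^ q ≤ w ^ (2*q) + 1 := by
  have hx : (0:ℝ) < x := lt_of_lt_of_le (by positivity) h1
  have hwq : (0:ℝ) ≤ w ^ (2*q) := Real.rpow_nonneg hw.le _
  rcases le_or_gt 0 q with hq | hq
  · have : x ^ q ≤ 1 := Real.rpow_le_one hx.le h2 hq
    linarith
  · have h3 : x ^ q ≤ (w^2) ^ q := Real.rpow_le_rpow_of_nonpos (by positivity) h1 hq.le
    have heq : ((w^2 : ℝ)) ^ q = w ^ (2*q) := by
      rw [← Real.rpow_natCast w 2, ← Real.rpow_mul hw.le]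
      norm_num
    rw [heq] at h3
    linarith

private lemma aux_mul_pow {w : ℝ} (hw : 0 < w) (r : ℝ) : w ^ r * w ^ 2 = w ^ (r + 2) := by
  rw [← Real.rpow_natCast w 2, ← Real.rpow_add hw]
  norm_num

private lemma delta_pos {a : ℝ} (ha : a ∈ Ioo (0:ℝ) 1) (w : ℝ) :
    0 < (1 - a^2) * w^2 + a^2 := by
  have h1 : 0 < a := ha.1
  have h2 : a < 1 := ha.2
  have h3 : (0:ℝ) < 1 - a^2 := by nlinarith
  nlinarith [mul_nonneg h3.le (sq_nonneg w), mul_pos h1 h1]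

private lemma delta_le_one {a w : ℝ} (ha : a ∈ Ioo (0:ℝ) 1) (hw1 : w ≤ 1) (hw0 : 0 < w) :
    (1 - a^2) * w^2 + a^2 ≤ 1 := by
  have h2 : a < 1 := ha.2
  have h1 : 0 < a := ha.1
  have h3 : (0:ℝ) ≤ 1 - a^2 := by nlinarith
  have h4 : (0:ℝ) ≤ 1 - w^2 := by nlinarith
  nlinarith [mul_nonneg h3 h4]

private lemma sq_le_delta {a w : ℝ} (ha : a ∈ Ioo (0:ℝ) 1) (hw1 : w ≤ 1) (hw0 : 0 < w) :
    w^2 ≤ (1 - a^2) * w^2 + a^2 := by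
  have h4 : (0:ℝ) ≤ 1 - w^2 := by nlinarith
  nlinarith [mul_nonneg (sq_nonneg a) h4]

private lemma cont_delta_rpow {a : ℝ} (ha : a ∈ Ioo (0:ℝ) 1) (q : ℝ) :
    Continuous (fun w : ℝ => ((1 - a^2) * w^2 + a^2) ^ q) := by
  apply Continuous.rpow_const (by continuity)
  intro w
  exact Or.inl (ne_of_gt (delta_pos ha w))

private lemma tendsto_delta {w : ℝ} :
    Tendsto (fun a : ℝ => (1 - a^2) * w^2 + a^2) (nhdsWithin 0 (Set.Ioi 0)) (nhds (w^2)) := by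
  have hc : Continuous fun a : ℝ => (1 - a^2) * w^2 + a^2 := by continuity
  have h2 : Tendsto (fun a : ℝ => (1 - a^2) * w^2 + a^2) (nhdsWithin 0 (Set.Ioi 0))
      (nhds ((1 - (0:ℝ)^2) * w^2 + (0:ℝ)^2)) := (hc.tendsto 0).mono_left nhdsWithin_le_nhds
  simpa using h2

private lemma tendsto_delta_rpow {w : ℝ} (hw : 0 < w) (q : ℝ) :
    Tendsto (fun a : ℝ => ((1 - a^2) * w^2 + a^2) ^ q) (nhdsWithin 0 (Set.Ioi 0))
      (nhds (w ^ (2*q))) := by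
  have h2 : ContinuousAt (fun x : ℝ => x ^ q) (w^2) :=
    Real.continuousAt_rpow_const _ _ (Or.inl (by positivity))
  have h3 := h2.tendsto.comp tendsto_delta
  have heq : ((w^2 : ℝ)) ^ q = w ^ (2*q) := by
    rw [← Real.rpow_natCast w 2, ← Real.rpow_mul hw.le]
    norm_num
  rw [heq] at h3
  exact h3


private lemma a_sq_le_delta {a w : ℝ} (ha : a ∈ Ioo (0:ℝ) 1) :
    a^2 ≤ (1 - a^2) * w^2 + a^2 := by
  have h1 : 0 < a := ha.1
  have h2 : a < 1 := ha.2
  have h3 : (0:ℝ) ≤ 1 - a^2 := by nlinarith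
  nlinarith [mul_nonneg h3 (sq_nonneg w)]

private lemma key_ineq {β a w : ℝ} (hβ : 1/2 < β) (ha : a ∈ Ioo (0:ℝ) 1)
    (hw0 : 0 < w) (hw1 : w ≤ 1) :
    a^2/4 * (((1 - a^2) * w^2 + a^2 + 1)^2 * ((1 - a^2) * w^2 + a^2) ^ (2*β - 5/2))
      ≤ (a ^ (2*β - 1) + a) * (w ^ (2*β - 2) + 1) := by
  have hΔpos : 0 < (1 - a^2) * w^2 + a^2 := delta_pos ha w
  have hΔ1 : (1 - a^2) * w^2 + a^2 ≤ 1 := delta_le_one ha hw1 hw0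
  have hsq : w^2 ≤ (1 - a^2) * w^2 + a^2 := sq_le_delta ha hw1 hw0
  have hasq : a^2 ≤ (1 - a^2) * w^2 + a^2 := a_sq_le_delta ha
  set Δ := (1 - a^2) * w^2 + a^2 with hΔdef
  have ha0 : 0 < a := ha.1
  have ha1 : a < 1 := ha.2
  have hW1 : (0:ℝ) ≤ w ^ (2*β - 2) := Real.rpow_nonneg hw0.le _
  have hrne : (0:ℝ) ≤ a ^ (2*β - 1) := Real.rpow_nonneg ha0.le _
  have hXnn : (0:ℝ) ≤ Δ ^ (2*β - 5/2) := Real.rpow_nonneg hΔpos.le _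
  have step1 : a^2/4 * ((Δ + 1)^2 * Δ ^ (2*β - 5/2)) ≤ a^2 * Δ ^ (2*β - 5/2) := by
    have h4 : (0:ℝ) ≤ 4 - (Δ + 1)^2 := by nlinarith
    nlinarith [mul_nonneg (mul_nonneg (sq_nonneg a) hXnn) h4]
  rcases le_or_gt (3/2) β with hc | hc
  · have h1 : Δ ^ (2*β - 5/2) ≤ 1 := Real.rpow_le_one hΔpos.le hΔ1 (by linarith)
    have h2 : a^2 * Δ ^ (2*β - 5/2) ≤ a^2 := by nlinarith
    have h3 : a^2 ≤ a := by nlinarith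
    have h4 : a ≤ (a ^ (2*β - 1) + a) * (w ^ (2*β - 2) + 1) := by nlinarith
    linarith
  · have h5 : a^2 * Δ ^ (2*β - 5/2) ≤ a ^ (2*β - 1) * Δ ^ (β - 1) := by
      have e1 : (a:ℝ)^2 = a ^ (2*β - 1) * a ^ (3 - 2*β) := by
        rw [← Real.rpow_add ha0, show 2*β - 1 + (3 - 2*β) = ((2:ℕ):ℝ) by push_cast; ring,
          Real.rpow_natCast]
      have e2 : a ^ (3 - 2*β) ≤ Δ ^ ((3 - 2*β)/2) := by
        have e2' : a ^ (3 - 2*β) = (a^2) ^ ((3 - 2*β)/2) := by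
          rw [← Real.rpow_natCast a 2, ← Real.rpow_mul ha0.le]
          congr 1
          push_cast; ring
        rw [e2']
        exact Real.rpow_le_rpow (by positivity) hasq (by linarith)
      have e3 : Δ ^ ((3 - 2*β)/2) * Δ ^ (2*β - 5/2) = Δ ^ (β - 1) := by
        rw [← Real.rpow_add hΔpos]; congr 1; ring
      calc a^2 * Δ ^ (2*β - 5/2) = a ^ (2*β - 1) * (a ^ (3 - 2*β) * Δ ^ (2*β - 5/2)) := by
            rw [e1]; ring
        _ ≤ a ^ (2*β - 1) * (Δ ^ ((3 - 2*β)/2) * Δ ^ (2*β - 5/2)) := by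
            apply mul_le_mul_of_nonneg_left _ hrne
            exact mul_le_mul_of_nonneg_right e2 hXnn
        _ = a ^ (2*β - 1) * Δ ^ (β - 1) := by rw [e3]
    have h6 : Δ ^ (β - 1) ≤ w ^ (2*(β - 1)) + 1 := aux_rpow_le hw0 hsq hΔ1 _
    rw [show 2*(β - 1) = 2*β - 2 by ring] at h6
    have h7 : a ^ (2*β - 1) * Δ ^ (β - 1) ≤ (a ^ (2*β - 1) + a) * (w ^ (2*β - 2) + 1) := by
      nlinarith [Real.rpow_nonneg hΔpos.le (β - 1)]
    linarith

set_option maxHeartbeats 1000000 in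
/-- The Rayleigh-quotient expression tends to `2β(2β+1)/(2β-1)` as `a → 0⁺`, for `β > 1/2`. -/
theorem stmt_8 (β : ℝ) (hβ : 1/2 < β) :
    Filter.Tendsto
      (fun a : ℝ =>
        (a^2/4 *
            (∫ w in (0:ℝ)..1,
              ((1 - a^2) * w^2 + a^2 + 1)^2 * ((1 - a^2) * w^2 + a^2) ^ (2*β - 5/2)) +
          4 * β^2 * (1 - a^2)^2 *
            (∫ w in (0:ℝ)..1,
              ((1 - a^2) * w^2 + a^2) ^ (2*β - 5/2) * w^2 * (1 - w^2))) /
        (∫ w in (0:ℝ)..1, ((1 - a^2) * w^2 + a^2) ^ (2*β + 1/2)))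
      (nhdsWithin 0 (Set.Ioi 0)) (nhds (2 * β * (2*β + 1) / (2*β - 1))) := by
  have hβ' : (0:ℝ) < 2*β - 1 := by linarith
  have hmem : Ioo (0:ℝ) 1 ∈ nhdsWithin (0:ℝ) (Set.Ioi 0) :=
    Ioo_mem_nhdsGT_of_mem (by norm_num : (0:ℝ) ∈ Ico (0:ℝ) 1)
  have hIoc : Set.uIoc (0:ℝ) 1 = Ioc (0:ℝ) 1 := uIoc_of_le (by norm_num)
  -- Denominator tendsto
  have hD : Tendsto (fun a : ℝ => ∫ w in (0:ℝ)..1, ((1 - a^2) * w^2 + a^2) ^ (2*β + 1/2))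
      (nhdsWithin 0 (Set.Ioi 0)) (nhds (1/(4*β+2))) := by
    have key := intervalIntegral.tendsto_integral_filter_of_dominated_convergence
      (μ := volume) (a := (0:ℝ)) (b := 1)
      (F := fun a w => ((1 - a^2) * w^2 + a^2) ^ (2*β + 1/2))
      (f := fun w => w ^ (4*β+1)) (bound := fun _ => 1)
      (by filter_upwards [hmem] with a ha
          exact (cont_delta_rpow ha _).aestronglyMeasurable.restrict)
      (by filter_upwards [hmem] with a ha
          refine ae_of_all _ fun w hw => ?_
          rw [hIoc] at hw
          rw [Real.norm_eq_abs,
            abs_of_nonneg (Real.rpow_nonneg (delta_pos ha w).le _)]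
          exact Real.rpow_le_one (delta_pos ha w).le
            (delta_le_one ha hw.2 hw.1) (by linarith))
      intervalIntegrable_const
      (by refine ae_of_all _ fun w hw => ?_
          rw [hIoc] at hw
          have := tendsto_delta_rpow hw.1 (2*β+1/2)
          rwa [show 2*(2*β+1/2) = 4*β+1 by ring] at this)
    have hval : (∫ w in (0:ℝ)..1, w ^ (4*β+1)) = 1/(4*β+2) := by
      rw [integral_rpow (Or.inl (by linarith : (-1:ℝ) < 4*β+1))]
      rw [Real.one_rpow, Real.zero_rpow (by linarith : (4*β+1) + 1 ≠ 0)]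
      ring_nf
    rwa [hval] at key
  -- Second integral tendsto
  have hB : Tendsto (fun a : ℝ => ∫ w in (0:ℝ)..1,
      ((1 - a^2) * w^2 + a^2) ^ (2*β - 5/2) * w^2 * (1 - w^2))
      (nhdsWithin 0 (Set.Ioi 0)) (nhds (1/(4*β-2) - 1/(4*β))) := by
    have key := intervalIntegral.tendsto_integral_filter_of_dominated_convergence
      (μ := volume) (a := (0:ℝ)) (b := 1)
      (F := fun a w => ((1 - a^2) * w^2 + a^2) ^ (2*β - 5/2) * w^2 * (1 - w^2))
      (f := fun w => w ^ (4*β-3) - w ^ (4*β-1))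
      (bound := fun w => w ^ (4*β-3) + w^2)
      (by filter_upwards [hmem] with a ha
          exact (((cont_delta_rpow ha _).mul (continuous_pow 2)).mul
            (by continuity)).aestronglyMeasurable.restrict)
      (by filter_upwards [hmem] with a ha
          refine ae_of_all _ fun w hw => ?_
          rw [hIoc] at hw
          have hΔpos := delta_pos ha w
          have haux := aux_rpow_le hw.1 (sq_le_delta ha hw.2 hw.1)
            (delta_le_one ha hw.2 hw.1) (2*β - 5/2)
          have e1 : w ^ (2*(2*β - 5/2)) * w^2 = w ^ (4*β-3) := by
            rw [aux_mul_pow hw.1]; congr 1; ring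
          have hF0 : (0:ℝ) ≤ ((1 - a^2) * w^2 + a^2) ^ (2*β - 5/2) * w^2 * (1 - w^2) := by
            have := Real.rpow_nonneg hΔpos.le (2*β - 5/2)
            have h1w : (0:ℝ) ≤ 1 - w^2 := by nlinarith [hw.1, hw.2]
            positivity
          rw [Real.norm_eq_abs, abs_of_nonneg hF0]
          have hXnn := Real.rpow_nonneg hΔpos.le (2*β - 5/2)
          have h1w : (0:ℝ) ≤ 1 - w^2 := by nlinarith [hw.1, hw.2]
          calc ((1 - a^2) * w^2 + a^2) ^ (2*β - 5/2) * w^2 * (1 - w^2)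
              ≤ ((1 - a^2) * w^2 + a^2) ^ (2*β - 5/2) * w^2 * 1 := by
                apply mul_le_mul_of_nonneg_left (by nlinarith [sq_nonneg w]) (by positivity)
            _ = ((1 - a^2) * w^2 + a^2) ^ (2*β - 5/2) * w^2 := by ring
            _ ≤ (w ^ (2*(2*β - 5/2)) + 1) * w^2 :=
                mul_le_mul_of_nonneg_right haux (sq_nonneg w)
            _ = w ^ (2*(2*β - 5/2)) * w^2 + w^2 := by ring
            _ = w ^ (4*β-3) + w^2 := by rw [e1])
      ((intervalIntegrable_rpow' (by linarith : (-1:ℝ) < 4*β-3)).add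
        ((continuous_pow 2).intervalIntegrable 0 1))
      (by refine ae_of_all _ fun w hw => ?_
          rw [hIoc] at hw
          have h1 := ((tendsto_delta_rpow hw.1 (2*β - 5/2)).mul_const (w^2)).mul_const (1 - w^2)
          have e1 : w ^ (2*(2*β - 5/2)) * w^2 = w ^ (4*β-3) := by
            rw [aux_mul_pow hw.1]; congr 1; ring
          have e2 : w ^ (4*β-3) * w^2 = w ^ (4*β-1) := by
            rw [aux_mul_pow hw.1]; congr 1; ring
          have e3 : w ^ (2*(2*β - 5/2)) * w^2 * (1 - w^2) = w ^ (4*β-3) - w ^ (4*β-1) := by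
            rw [e1, mul_one_sub, e2]
          rwa [e3] at h1)
    have hval : (∫ w in (0:ℝ)..1, (w ^ (4*β-3) - w ^ (4*β-1)))
        = 1/(4*β-2) - 1/(4*β) := by
      rw [intervalIntegral.integral_sub (intervalIntegrable_rpow' (by linarith))
        (intervalIntegrable_rpow' (by linarith)),
        integral_rpow (Or.inl (by linarith : (-1:ℝ) < 4*β-3)),
        integral_rpow (Or.inl (by linarith : (-1:ℝ) < 4*β-1)),
        Real.one_rpow, Real.one_rpow,
        Real.zero_rpow (by linarith : (4*β-3) + 1 ≠ 0),
        Real.zero_rpow (by linarith : (4*β-1) + 1 ≠ 0)]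
      ring_nf
    rwa [hval] at key
  -- First summand tends to zero
  have hA : Tendsto (fun a : ℝ => a^2/4 *
      (∫ w in (0:ℝ)..1,
        ((1 - a^2) * w^2 + a^2 + 1)^2 * ((1 - a^2) * w^2 + a^2) ^ (2*β - 5/2)))
      (nhdsWithin 0 (Set.Ioi 0)) (nhds 0) := by
    have hup : Tendsto (fun a : ℝ => (a ^ (2*β - 1) + a) * (1/(2*β-1) + 1))
        (nhdsWithin 0 (Set.Ioi 0)) (nhds 0) := by
      have h1 : Tendsto (fun a : ℝ => a ^ (2*β - 1)) (nhdsWithin 0 (Set.Ioi 0)) (nhds 0) := by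
        have hc : ContinuousAt (fun x : ℝ => x ^ (2*β - 1)) 0 :=
          Real.continuousAt_rpow_const _ _ (Or.inr (by linarith))
        have h : Tendsto (fun x : ℝ => x ^ (2*β - 1)) (nhdsWithin 0 (Set.Ioi 0))
            (nhds ((0:ℝ) ^ (2*β - 1))) := hc.tendsto.mono_left nhdsWithin_le_nhds
        rwa [Real.zero_rpow (by linarith : 2*β - 1 ≠ 0)] at h
      have h2 : Tendsto (fun a : ℝ => a) (nhdsWithin 0 (Set.Ioi 0)) (nhds 0) :=
        Filter.Tendsto.mono_left (continuous_id.tendsto 0) nhdsWithin_le_nhds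
      have h3 := (h1.add h2).mul_const (1/(2*β-1) + 1)
      simpa using h3
    apply squeeze_zero' ?_ ?_ hup
    · filter_upwards [hmem] with a ha
      apply mul_nonneg (by positivity)
      apply intervalIntegral.integral_nonneg (by norm_num)
      intro w hw
      exact mul_nonneg (sq_nonneg _) (Real.rpow_nonneg (delta_pos ha w).le _)
    · filter_upwards [hmem] with a ha
      rw [← intervalIntegral.integral_const_mul]
      have hgi : IntervalIntegrable
          (fun w : ℝ => (a ^ (2*β - 1) + a) * (w ^ (2*β - 2) + 1)) volume 0 1 :=
        ((intervalIntegrable_rpow' (by linarith : (-1:ℝ) < 2*β-2)).add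
          intervalIntegrable_const).const_mul _
      have hfi : IntervalIntegrable
          (fun w : ℝ => a^2/4 *
            (((1 - a^2) * w^2 + a^2 + 1)^2 * ((1 - a^2) * w^2 + a^2) ^ (2*β - 5/2)))
          volume 0 1 := by
        apply Continuous.intervalIntegrable
        exact continuous_const.mul ((by continuity : Continuous fun w : ℝ =>
          ((1 - a^2) * w^2 + a^2 + 1)^2).mul (cont_delta_rpow ha _))
      have hmono := intervalIntegral.integral_mono_ae_restrict (by norm_num : (0:ℝ) ≤ 1)
        hfi hgi ?_
      · refine le_trans hmono (le_of_eq ?_)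
        rw [intervalIntegral.integral_const_mul,
          intervalIntegral.integral_add (intervalIntegrable_rpow'
            (by linarith : (-1:ℝ) < 2*β-2)) intervalIntegrable_const,
          integral_rpow (Or.inl (by linarith : (-1:ℝ) < 2*β-2)),
          Real.one_rpow, Real.zero_rpow (by linarith : (2*β-2) + 1 ≠ 0)]
        simp only [intervalIntegral.integral_const, smul_eq_mul]
        ring_nf
      · have h0 : ∀ᵐ w : ℝ ∂(volume.restrict (Icc (0:ℝ) 1)), w ≠ 0 := by
          refine ae_restrict_of_ae ?_
          rw [ae_iff]
          simp only [ne_eq, not_not, setOf_eq_eq_singleton]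
          exact Real.volume_singleton
        filter_upwards [h0, ae_restrict_mem measurableSet_Icc] with w hw0 hw1
        exact key_ineq hβ ha (lt_of_le_of_ne hw1.1 (Ne.symm hw0)) hw1.2
  -- Prefactor of the second integral
  have hc2 : Tendsto (fun a : ℝ => 4 * β^2 * (1 - a^2)^2) (nhdsWithin 0 (Set.Ioi 0))
      (nhds (4 * β^2)) := by
    have hc : Continuous fun a : ℝ => 4 * β^2 * (1 - a^2)^2 := by continuity
    have h : Tendsto (fun a : ℝ => 4 * β^2 * (1 - a^2)^2) (nhdsWithin 0 (Set.Ioi 0))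
        (nhds (4 * β^2 * (1 - (0:ℝ)^2)^2)) := (hc.tendsto 0).mono_left nhdsWithin_le_nhds
    simpa using h
  -- Assemble
  have hne : (1/(4*β+2) : ℝ) ≠ 0 := by positivity
  have hfinal := (hA.add (hc2.mul hB)).div hD hne
  have hval : (0 + 4 * β^2 * (1/(4*β-2) - 1/(4*β))) / (1/(4*β+2))
      = 2 * β * (2*β + 1) / (2*β - 1) := by
    have hb0 : β ≠ 0 := by linarith
    have hb1 : (2*β - 1 : ℝ) ≠ 0 := by linarith
    have hb2 : (4*β - 2 : ℝ) ≠ 0 := by linarith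
    have hb3 : (4*β + 2 : ℝ) ≠ 0 := by linarith
    field_simp
    rw [eq_div_iff (by linarith)]
    ring
  rwa [hval] at hfinal
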